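/- Fix ζ, η ∈ ℂ and let 𝒯_i (i = −2,…,1) be the basic Tetranacci polynomials. Then for all j ∈ ℤ: 𝒯_{−1}(j) = 𝒯_{−2}(j−1) − η·𝒯_{−2}(j), 𝒯_0(j) = η·𝒯_{−2}(j+1) − 𝒯_{−2}(j+2), and 𝒯_1(j) = −𝒯_{−2}(j+1). Hence all four basic Tetranacci polynomials are determined by 𝒯_{−2}. -/

import Mathlib

private lemma tetra_zero (ζ η : ℂ) (f : ℤ → ℂ)
    (hrec : ∀ j : ℤ, f (j + 2) = ζ * f j - f (j - 2) + η * (f (j + 1) + f (j - 1)))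
    (h2 : f (-2) = 0) (h1 : f (-1) = 0) (h0 : f 0 = 0) (hp : f 1 = 0) :
    ∀ j : ℤ, f j = 0 := by
  have key : ∀ n : ℤ, f (n - 2) = 0 ∧ f (n - 1) = 0 ∧ f n = 0 ∧ f (n + 1) = 0 := by
    intro n
    induction n using Int.induction_on with
    | zero =>
      refine ⟨?_, ?_, h0, ?_⟩ <;> norm_num [h2, h1, hp]
    | succ n ih =>
      obtain ⟨a, b, c, d⟩ := ih
      have hr := hrec n
      rw [a, b, c, d] at hr
      refine ⟨?_, ?_, d, ?_⟩
      · rw [show (n : ℤ) + 1 - 2 = n - 1 by ring]; exact b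
      · rw [show (n : ℤ) + 1 - 1 = n by ring]; exact c
      · rw [show (n : ℤ) + 1 + 1 = n + 2 by ring, hr]; ring
    | pred n ih =>
      obtain ⟨a, b, c, d⟩ := ih
      have hr := hrec (-(n : ℤ) - 1)
      rw [show -(n : ℤ) - 1 + 2 = -n + 1 by ring, show -(n : ℤ) - 1 + 1 = -n by ring,
        show -(n : ℤ) - 1 - 1 = -n - 2 by ring, d, c, a] at hr
      refine ⟨?_, ?_, b, ?_⟩
      · linear_combination hr + ζ * b
      · rw [show -(n : ℤ) - 1 - 1 = -n - 2 by ring]; exact a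
      · rw [show -(n : ℤ) - 1 + 1 = -n by ring]; exact c
  intro j
  exact (key j).2.2.1

theorem tetranacci_basic_from_Tm2 (ζ η : ℂ) (Tm2 Tm1 T0 T1 : ℤ → ℂ)
    (hTm2rec : ∀ j : ℤ, Tm2 (j + 2) = ζ * Tm2 j - Tm2 (j - 2) + η * (Tm2 (j + 1) + Tm2 (j - 1)))
    (hTm1rec : ∀ j : ℤ, Tm1 (j + 2) = ζ * Tm1 j - Tm1 (j - 2) + η * (Tm1 (j + 1) + Tm1 (j - 1)))
    (hT0rec : ∀ j : ℤ, T0 (j + 2) = ζ * T0 j - T0 (j - 2) + η * (T0 (j + 1) + T0 (j - 1)))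
    (hT1rec : ∀ j : ℤ, T1 (j + 2) = ζ * T1 j - T1 (j - 2) + η * (T1 (j + 1) + T1 (j - 1)))
    (hTm2init : Tm2 (-2) = 1 ∧ Tm2 (-1) = 0 ∧ Tm2 0 = 0 ∧ Tm2 1 = 0)
    (hTm1init : Tm1 (-2) = 0 ∧ Tm1 (-1) = 1 ∧ Tm1 0 = 0 ∧ Tm1 1 = 0)
    (hT0init : T0 (-2) = 0 ∧ T0 (-1) = 0 ∧ T0 0 = 1 ∧ T0 1 = 0)
    (hT1init : T1 (-2) = 0 ∧ T1 (-1) = 0 ∧ T1 0 = 0 ∧ T1 1 = 1) :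
    ∀ j : ℤ, Tm1 j = Tm2 (j - 1) - η * Tm2 j ∧
      T0 j = η * Tm2 (j + 1) - Tm2 (j + 2) ∧
      T1 j = -Tm2 (j + 1) := by
  obtain ⟨m2a, m2b, m2c, m2d⟩ := hTm2init
  obtain ⟨m1a, m1b, m1c, m1d⟩ := hTm1init
  obtain ⟨t0a, t0b, t0c, t0d⟩ := hT0init
  obtain ⟨t1a, t1b, t1c, t1d⟩ := hT1init
  -- extra values of Tm2
  have hm3 : Tm2 (-3) = η := by
    have h := hTm2rec (-1)
    norm_num [m2a, m2b, m2c, m2d] at h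
    linear_combination h
  have h2 : Tm2 2 = -1 := by
    have h := hTm2rec 0
    norm_num [m2a, m2b, m2c, m2d] at h
    linear_combination h
  have h3 : Tm2 3 = -η := by
    have h := hTm2rec 1
    norm_num [m2a, m2b, m2c, m2d, h2] at h
    linear_combination h
  -- shifted recursions for Tm2
  have srec : ∀ c : ℤ, ∀ j : ℤ, Tm2 (j + c + 2) =
      ζ * Tm2 (j + c) - Tm2 (j + c - 2) + η * (Tm2 (j + c + 1) + Tm2 (j + c - 1)) := by
    intro c j
    have h := hTm2rec (j + c)
    exact h
  have g1 : ∀ j : ℤ, Tm1 j - (Tm2 (j - 1) - η * Tm2 j) = 0 := by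
    apply tetra_zero ζ η
    · intro j
      have h1 := hTm1rec j
      have h2' := hTm2rec (j - 1)
      have h3' := hTm2rec j
      rw [show j - 1 + 2 = j + 1 by ring, show j - 1 + 1 = j by ring,
        show j - 1 - 1 = j - 2 by ring, show j - 1 - 2 = j - 3 by ring] at h2'
      rw [show j + 2 - 1 = j + 1 by ring, show j + 1 - 1 = j by ring,
        show j - 1 - 1 = j - 2 by ring, show j - 2 - 1 = j - 3 by ring]
      linear_combination h1 - h2' + η * h3'
    · norm_num [m1a, hm3, m2a]
    · norm_num [m1b, m2a, m2b]
    · norm_num [m1c, m2b, m2c]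
    · norm_num [m1d, m2c, m2d]
  have g0 : ∀ j : ℤ, T0 j - (η * Tm2 (j + 1) - Tm2 (j + 2)) = 0 := by
    apply tetra_zero ζ η
    · intro j
      have h1 := hT0rec j
      have h2' := hTm2rec (j + 1)
      have h3' := hTm2rec (j + 2)
      rw [show j + 1 + 2 = j + 3 by ring, show j + 1 + 1 = j + 2 by ring,
        show j + 1 - 1 = j by ring, show j + 1 - 2 = j - 1 by ring] at h2'
      rw [show j + 2 + 2 = j + 4 by ring, show j + 2 + 1 = j + 3 by ring,
        show j + 2 - 1 = j + 1 by ring, show j + 2 - 2 = j by ring] at h3'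
      rw [show j + 2 + 1 = j + 3 by ring, show j + 2 + 2 = j + 4 by ring,
        show j + 1 + 1 = j + 2 by ring, show j + 1 + 2 = j + 3 by ring,
        show j - 1 + 1 = j by ring, show j - 1 + 2 = j + 1 by ring,
        show j - 2 + 1 = j - 1 by ring, show j - 2 + 2 = j by ring]
      linear_combination h1 - η * h2' + h3'
    · norm_num [t0a, m2b, m2c]
    · norm_num [t0b, m2c, m2d]
    · norm_num [t0c, m2d, h2]
    · norm_num [t0d, h2, h3]
  have gg1 : ∀ j : ℤ, T1 j - (-Tm2 (j + 1)) = 0 := by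
    apply tetra_zero ζ η
    · intro j
      have h1 := hT1rec j
      have h2' := hTm2rec (j + 1)
      rw [show j + 1 + 2 = j + 3 by ring, show j + 1 + 1 = j + 2 by ring,
        show j + 1 - 1 = j by ring, show j + 1 - 2 = j - 1 by ring] at h2'
      rw [show j + 2 + 1 = j + 3 by ring, show j + 1 + 1 = j + 2 by ring,
        show j - 1 + 1 = j by ring, show j - 2 + 1 = j - 1 by ring]
      linear_combination h1 + h2'
    · norm_num [t1a, m2b]
    · norm_num [t1b, m2c]
    · norm_num [t1c, m2d]
    · norm_num [t1d, h2]
  intro j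
  refine ⟨?_, ?_, ?_⟩
  · linear_combination g1 j
  · linear_combination g0 j
  · linear_combination gg1 j
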